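/- Let F be the distribution function of a probability measure on [0,∞) with F(0)=0, let Ψ_F be the compounding operator, let α ∈ ℝ, and let g : [0,∞) → ℝ be measurable and locally bounded. Then the unique solution u_{α,g} of u = α(g + Ψ_F u) admits the series representation u_{α,g}(x) = Σ_{n=0}^∞ α^{n+1} (Ψ_Fⁿ g)(x) for every x ≥ 0, and for each fixed x the series converges uniformly with respect to α on compact intervals of ℝ. -/

import Mathlib

open MeasureTheory Set Filter
open Topology
open scoped Interval

/-- The compounding operator `Ψ_F` associated with the probability measure `μ` on `[0,∞)`
(whose distribution function is `F`, so that `F(0) = 0` reads `μ (Iic 0) = 0`):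
`(Ψ_F h)(x) = ∫₀ˣ (h(z) - ∫₀ᶻ h(z-y) dF(y)) dz`,
the inner integral being the Lebesgue–Stieltjes integral with respect to `F`. -/
noncomputable def Psi (μ : Measure ℝ) (h : ℝ → ℝ) : ℝ → ℝ :=
  fun x => ∫ z in (0:ℝ)..x, (h z - ∫ y in Icc (0:ℝ) z, h (z - y) ∂μ)

/-- `h : [0,∞) → ℝ` is locally bounded. -/
def LocBdd (h : ℝ → ℝ) : Prop :=
  ∀ x : ℝ, ∃ M : ℝ, ∀ z ∈ Icc (0:ℝ) x, |h z| ≤ M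

/-- `‖h‖_{[0,x]} = sup_{z ∈ [0,x]} |h z|`. -/
noncomputable def supNorm (h : ℝ → ℝ) (x : ℝ) : ℝ :=
  sSup ((fun z => |h z|) '' Icc (0:ℝ) x)

namespace SolSeries

variable (μ : Measure ℝ) [IsProbabilityMeasure μ]

/-- measurable and bounded on compacts -/
def Good (h : ℝ → ℝ) : Prop :=
  Measurable h ∧ ∀ b : ℝ, ∃ M : ℝ, 0 ≤ M ∧ ∀ z ∈ Icc (-b) b, |h z| ≤ M

/-- inner integral -/
noncomputable def W (h : ℝ → ℝ) : ℝ → ℝ := fun z => ∫ y in Icc (0:ℝ) z, h (z - y) ∂μ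

theorem measurable_W {h : ℝ → ℝ} (hh : Measurable h) : Measurable (W μ h) := by
  have hS : MeasurableSet {p : ℝ × ℝ | 0 ≤ p.2 ∧ p.2 ≤ p.1} :=
    (measurableSet_le measurable_const measurable_snd).inter
      (measurableSet_le measurable_snd measurable_fst)
  have hF : Measurable ({p : ℝ × ℝ | 0 ≤ p.2 ∧ p.2 ≤ p.1}.indicator
      (fun p : ℝ × ℝ => h (p.1 - p.2))) :=
    (hh.comp (measurable_fst.sub measurable_snd)).indicator hS
  have key : W μ h = fun z => ∫ y, ({p : ℝ × ℝ | 0 ≤ p.2 ∧ p.2 ≤ p.1}.indicator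
      (fun p : ℝ × ℝ => h (p.1 - p.2))) (z, y) ∂μ := by
    funext z
    rw [W, ← integral_indicator measurableSet_Icc]
    refine integral_congr_ae (Eventually.of_forall fun y => ?_)
    simp only [indicator_apply, mem_Icc, mem_setOf_eq]
  rw [key]
  exact (hF.stronglyMeasurable.integral_prod_right').measurable

theorem W_bound {h : ℝ → ℝ} {M b : ℝ} (hM0 : 0 ≤ M)
    (hM : ∀ z ∈ Icc (0:ℝ) b, |h z| ≤ M) :
    ∀ z, z ≤ b → |W μ h z| ≤ M := by
  intro z hz
  by_cases hz0 : 0 ≤ z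
  · have : ‖∫ y in Icc (0:ℝ) z, h (z - y) ∂μ‖ ≤ M * (μ (Icc (0:ℝ) z)).toReal := by
      refine norm_setIntegral_le_of_norm_le_const_ae' (measure_lt_top _ _)
        (Eventually.of_forall ?_)
      intro y hy
      rw [Real.norm_eq_abs]
      exact hM _ ⟨by linarith [hy.2], by linarith [hy.1]⟩
    calc |W μ h z| ≤ M * (μ (Icc (0:ℝ) z)).toReal := this
    _ ≤ M * 1 := by
        refine mul_le_mul_of_nonneg_left ?_ hM0
        have h1 : μ (Icc (0:ℝ) z) ≤ 1 := prob_le_one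
        exact ENNReal.toReal_le_of_le_ofReal one_pos.le (by simpa using h1)
    _ = M := mul_one M
  · have : Icc (0:ℝ) z = ∅ := Icc_eq_empty (by linarith [not_le.mp hz0])
    simp [W, this, hM0]

theorem intInt {h : ℝ → ℝ} (hh : Good h) (a b : ℝ) :
    IntervalIntegrable (fun z => h z - W μ h z) volume a b := by
  obtain ⟨hm, hbb⟩ := hh
  set c : ℝ := max |a| |b| with hc
  have hc0 : (0:ℝ) ≤ c := le_trans (abs_nonneg a) (le_max_left _ _)
  obtain ⟨M, hM0, hM⟩ := hbb c
  rw [intervalIntegrable_iff]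
  have hconst : IntegrableOn (fun _ : ℝ => M + M) (Ι a b) volume :=
    integrableOn_const (by rw [uIoc]; exact measure_Ioc_lt_top.ne)
  refine Integrable.mono' hconst ((hm.sub (measurable_W μ hm)).aestronglyMeasurable) ?_
  filter_upwards [ae_restrict_mem measurableSet_uIoc] with z hz
  have hzc : z ∈ Icc (-c) c := by
    rw [uIoc, mem_Ioc] at hz
    have h1 := neg_abs_le a; have h2 := neg_abs_le b
    have h3 := le_abs_self a; have h4 := le_abs_self b
    have h5 : |a| ≤ c := le_max_left _ _
    have h6 : |b| ≤ c := le_max_right _ _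
    constructor
    · have hmin : -c ≤ min a b := le_min (by linarith) (by linarith)
      linarith [lt_of_le_of_lt hmin hz.1]
    · exact hz.2.trans (max_le (by linarith) (by linarith))
  have h1 : |h z| ≤ M := hM z hzc
  have h2 : |W μ h z| ≤ M :=
    W_bound μ hM0 (fun w hw => hM w ⟨by linarith [hw.1], hw.2⟩) z hzc.2
  calc ‖h z - W μ h z‖ ≤ |h z| + |W μ h z| := abs_sub _ _
  _ ≤ M + M := add_le_add h1 h2

theorem cont_Psi {h : ℝ → ℝ} (hh : Good h) : Continuous (Psi μ h) :=
  intervalIntegral.continuous_primitive (fun a b => intInt μ hh a b) 0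

theorem good_Psi {h : ℝ → ℝ} (hh : Good h) : Good (Psi μ h) := by
  refine ⟨(cont_Psi μ hh).measurable, fun b => ?_⟩
  obtain ⟨C, hC⟩ := isCompact_Icc.exists_bound_of_continuousOn
    (s := Icc (-b) b) (cont_Psi μ hh).continuousOn
  exact ⟨max C 0, le_max_right _ _, fun z hz => (hC z hz).trans (le_max_left _ _)⟩

theorem good_iter {h : ℝ → ℝ} (hh : Good h) : ∀ n : ℕ, Good ((Psi μ)^[n] h) := by
  intro n
  induction n with
  | zero => exact hh
  | succ n ih => rw [Function.iterate_succ_apply']; exact good_Psi μ ih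

theorem Psi_eq (h : ℝ → ℝ) (x : ℝ) :
    Psi μ h x = ∫ z in (0:ℝ)..x, (h z - W μ h z) := rfl

theorem W_congr {h₁ h₂ : ℝ → ℝ} {b : ℝ} (h12 : EqOn h₁ h₂ (Icc 0 b)) :
    ∀ z ∈ Icc (0:ℝ) b, W μ h₁ z = W μ h₂ z := by
  intro z hz
  refine setIntegral_congr_fun measurableSet_Icc fun y hy => ?_
  exact h12 ⟨by linarith [hy.2, hy.1], by linarith [hy.1, hz.2]⟩

theorem Psi_congr {h₁ h₂ : ℝ → ℝ} {b : ℝ} (h12 : EqOn h₁ h₂ (Icc 0 b)) :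
    EqOn (Psi μ h₁) (Psi μ h₂) (Icc 0 b) := by
  intro x hx
  refine intervalIntegral.integral_congr fun z hz => ?_
  have hz' : z ∈ Icc (0:ℝ) b := by
    rw [uIcc_of_le hx.1, mem_Icc] at hz
    exact ⟨hz.1, hz.2.trans hx.2⟩
  show h₁ z - W μ h₁ z = h₂ z - W μ h₂ z
  rw [h12 hz', W_congr μ h12 z hz']

theorem iter_congr {h₁ h₂ : ℝ → ℝ} (h12 : EqOn h₁ h₂ (Ici 0)) :
    ∀ n : ℕ, EqOn ((Psi μ)^[n] h₁) ((Psi μ)^[n] h₂) (Ici 0) := by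
  intro n
  induction n with
  | zero => exact h12
  | succ n ih =>
    intro x hx
    rw [Function.iterate_succ_apply', Function.iterate_succ_apply']
    exact Psi_congr μ (fun z hz => ih (hz.1 : (0:ℝ) ≤ z)) ⟨hx, le_refl x⟩

theorem integrableOn_comp {h : ℝ → ℝ} (hh : Good h) (z : ℝ) :
    IntegrableOn (fun y => h (z - y)) (Icc (0:ℝ) z) μ := by
  obtain ⟨hm, hbb⟩ := hh
  obtain ⟨M, hM0, hM⟩ := hbb |z|
  have hconst : IntegrableOn (fun _ : ℝ => M) (Icc (0:ℝ) z) μ :=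
    integrableOn_const (measure_lt_top _ _).ne
  refine Integrable.mono' hconst
    ((hm.comp (measurable_const.sub measurable_id)).aestronglyMeasurable) ?_
  filter_upwards [ae_restrict_mem measurableSet_Icc] with y hy
  refine hM _ ⟨?_, ?_⟩
  · linarith [hy.2, abs_nonneg z]
  · linarith [hy.1, le_abs_self z]

theorem W_linear {h₁ h₂ : ℝ → ℝ} (hh₁ : Good h₁) (hh₂ : Good h₂) (c d z : ℝ) :
    W μ (fun y => c * h₁ y + d * h₂ y) z = c * W μ h₁ z + d * W μ h₂ z := by
  unfold W
  rw [← integral_const_mul, ← integral_const_mul, ← integral_add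
    ((integrableOn_comp μ hh₁ z).const_mul c) ((integrableOn_comp μ hh₂ z).const_mul d)]

theorem Psi_linear {h₁ h₂ : ℝ → ℝ} (hh₁ : Good h₁) (hh₂ : Good h₂) (c d x : ℝ) :
    Psi μ (fun y => c * h₁ y + d * h₂ y) x = c * Psi μ h₁ x + d * Psi μ h₂ x := by
  rw [Psi_eq, Psi_eq, Psi_eq, ← intervalIntegral.integral_const_mul,
    ← intervalIntegral.integral_const_mul,
    ← intervalIntegral.integral_add ((intInt μ hh₁ 0 x).const_mul c)
      ((intInt μ hh₂ 0 x).const_mul d)]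
  refine intervalIntegral.integral_congr fun z hz => ?_
  rw [W_linear μ hh₁ hh₂ c d z]
  ring

theorem good_linear {h₁ h₂ : ℝ → ℝ} (hh₁ : Good h₁) (hh₂ : Good h₂) (c d : ℝ) :
    Good (fun y => c * h₁ y + d * h₂ y) := by
  refine ⟨(hh₁.1.const_mul c).add (hh₂.1.const_mul d), fun b => ?_⟩
  obtain ⟨M₁, hM₁0, hM₁⟩ := hh₁.2 b
  obtain ⟨M₂, hM₂0, hM₂⟩ := hh₂.2 b
  refine ⟨|c| * M₁ + |d| * M₂, by positivity, fun z hz => ?_⟩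
  calc |c * h₁ z + d * h₂ z| ≤ |c * h₁ z| + |d * h₂ z| := abs_add_le _ _
  _ = |c| * |h₁ z| + |d| * |h₂ z| := by rw [abs_mul, abs_mul]
  _ ≤ |c| * M₁ + |d| * M₂ := by
      gcongr
      exacts [hM₁ z hz, hM₂ z hz]

theorem iter_linear {h₁ h₂ : ℝ → ℝ} (hh₁ : Good h₁) (hh₂ : Good h₂) :
    ∀ (n : ℕ) (c d x : ℝ),
      (Psi μ)^[n] (fun y => c * h₁ y + d * h₂ y) x =
        c * (Psi μ)^[n] h₁ x + d * (Psi μ)^[n] h₂ x := by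
  intro n
  induction n with
  | zero => intro c d x; rfl
  | succ n ih =>
    intro c d x
    rw [Function.iterate_succ_apply', Function.iterate_succ_apply',
      Function.iterate_succ_apply']
    have h1 : Good ((Psi μ)^[n] h₁) := good_iter μ hh₁ n
    have h2 : Good ((Psi μ)^[n] h₂) := good_iter μ hh₂ n
    have : (Psi μ)^[n] (fun y => c * h₁ y + d * h₂ y) =
        fun y => c * (Psi μ)^[n] h₁ y + d * (Psi μ)^[n] h₂ y := funext fun y => ih c d y
    rw [this, Psi_linear μ h1 h2]

theorem iter_bound {h : ℝ → ℝ} (hh : Good h) {b M : ℝ} (hb : 0 ≤ b) (hM0 : 0 ≤ M)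
    (hM : ∀ z ∈ Icc (0:ℝ) b, |h z| ≤ M) :
    ∀ (n : ℕ), ∀ x ∈ Icc (0:ℝ) b, |(Psi μ)^[n] h x| ≤ M * (2 * x) ^ n / n.factorial := by
  intro n
  induction n with
  | zero => intro x hx; simpa using hM x hx
  | succ n ih =>
    intro x hx
    set v := (Psi μ)^[n] h with hv
    have hgv : Good v := good_iter μ hh n
    have hWb : ∀ z ∈ Icc (0:ℝ) x, |W μ v z| ≤ M * (2 * z) ^ n / n.factorial := by
      intro z hz
      have hz0 : (0:ℝ) ≤ z := hz.1
      have hmono : ∀ w ∈ Icc (0:ℝ) z, |v w| ≤ M * (2 * z) ^ n / n.factorial := by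
        intro w hw
        have h1 : |v w| ≤ M * (2 * w) ^ n / n.factorial :=
          ih w ⟨hw.1, le_trans (hw.2.trans hz.2) hx.2⟩
        refine h1.trans ?_
        have : (2 * w) ^ n ≤ (2 * z) ^ n :=
          pow_le_pow_left₀ (by linarith [hw.1]) (by linarith [hw.2]) n
        have hfac : (0:ℝ) < n.factorial := by positivity
        have h2 : M * (2 * w) ^ n ≤ M * (2 * z) ^ n := mul_le_mul_of_nonneg_left this hM0
        exact div_le_div_of_nonneg_right h2 hfac.le |>.trans_eq rfl
      exact W_bound μ (by positivity) hmono z (le_refl z)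
    rw [Function.iterate_succ_apply', ← hv]
    have hbnd : ∀ᵐ z ∂(volume.restrict (Ι (0:ℝ) x)),
        ‖v z - W μ v z‖ ≤ 2 * M * 2 ^ n / n.factorial * z ^ n := by
      filter_upwards [ae_restrict_mem measurableSet_uIoc] with z hz
      have hz' : z ∈ Icc (0:ℝ) x := by
        rw [uIoc_of_le hx.1, mem_Ioc] at hz
        exact ⟨hz.1.le, hz.2⟩
      have h1 : |v z| ≤ M * (2 * z) ^ n / n.factorial :=
        ih z ⟨hz'.1, hz'.2.trans hx.2⟩
      have h2 : |W μ v z| ≤ M * (2 * z) ^ n / n.factorial := hWb z hz'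
      calc ‖v z - W μ v z‖ ≤ |v z| + |W μ v z| := abs_sub _ _
      _ ≤ 2 * (M * (2 * z) ^ n / n.factorial) := by linarith
      _ = 2 * M * 2 ^ n / n.factorial * z ^ n := by
          rw [mul_pow]; ring
    have hcont : IntervalIntegrable (fun z => 2 * M * 2 ^ n / n.factorial * z ^ n)
        volume 0 x := (continuous_const.mul (continuous_pow n)).intervalIntegrable 0 x
    have key := intervalIntegral.norm_integral_le_abs_of_norm_le
      (f := fun z => v z - W μ v z) (μ := volume) (a := 0) (b := x) hbnd hcont
    have hval : (∫ z in (0:ℝ)..x, 2 * M * 2 ^ n / n.factorial * z ^ n) =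
        M * (2 * x) ^ (n + 1) / (n + 1).factorial := by
      rw [intervalIntegral.integral_const_mul, integral_pow]
      rw [Nat.factorial_succ, mul_pow]
      push_cast
      have hfac : ((n.factorial : ℝ)) ≠ 0 := by positivity
      field_simp
      ring
    rw [Psi_eq, ← hval]
    calc |∫ z in (0:ℝ)..x, (v z - W μ v z)| = ‖∫ z in (0:ℝ)..x, (v z - W μ v z)‖ := rfl
    _ ≤ |∫ z in (0:ℝ)..x, 2 * M * 2 ^ n / n.factorial * z ^ n| := key
    _ = ∫ z in (0:ℝ)..x, 2 * M * 2 ^ n / n.factorial * z ^ n := by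
        rw [abs_eq_self, hval]
        apply div_nonneg (mul_nonneg hM0 (pow_nonneg (by linarith [hx.1]) _)) (by positivity)

theorem telescope {G U : ℝ → ℝ} (hG : Good G) (hU : Good U) (α : ℝ)
    (hequ : ∀ x ≥ (0:ℝ), U x = α * G x + α * Psi μ U x) :
    ∀ N : ℕ, ∀ x ≥ (0:ℝ),
      U x = (∑ n ∈ Finset.range N, α ^ (n + 1) * (Psi μ)^[n] G x)
        + α ^ N * (Psi μ)^[N] U x := by
  intro N
  induction N with
  | zero => intro x hx; simp
  | succ N ih =>
    intro x hx
    have key : (Psi μ)^[N] U x = α * (Psi μ)^[N] G x + α * (Psi μ)^[N + 1] U x := by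
      have e1 : (Psi μ)^[N] U x = (Psi μ)^[N] (fun y => α * G y + α * Psi μ U y) x :=
        iter_congr μ (fun y hy => hequ y hy) N (mem_Ici.mpr hx)
      rw [e1, iter_linear μ hG (good_Psi μ hU) N α α x, ← Function.iterate_succ_apply]
    have hsum := ih x hx
    rw [Finset.sum_range_succ]
    rw [key] at hsum
    rw [hsum]
    ring

theorem good_indicator {h : ℝ → ℝ} (hm : Measurable h) (hb : LocBdd h) :
    Good ((Ici (0:ℝ)).indicator h) := by
  refine ⟨hm.indicator measurableSet_Ici, fun b => ?_⟩
  obtain ⟨M, hM⟩ := hb b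
  refine ⟨max M 0, le_max_right _ _, fun z hz => ?_⟩
  by_cases hz0 : z ∈ Ici (0:ℝ)
  · rw [indicator_of_mem hz0]
    exact (hM z ⟨hz0, hz.2⟩).trans (le_max_left _ _)
  · rw [indicator_of_notMem hz0]
    simpa using le_max_right M 0

end SolSeries

/-- the unique solution `u_{α,g}` of `u = α(g + Ψ_F u)` admits the series
representation `u_{α,g}(x) = Σ_{n≥0} α^{n+1} (Ψ_Fⁿ g)(x)` for every `x ≥ 0`, and for each
fixed `x` the series converges uniformly with respect to `α` on compact intervals of `ℝ`. -/
theorem solution_series (μ : Measure ℝ) [IsProbabilityMeasure μ]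
    (hμ0 : μ (Iic 0) = 0) (α : ℝ)
    (g : ℝ → ℝ) (hg : Measurable g) (hgb : LocBdd g)
    (u : ℝ → ℝ) (hu : Measurable u) (hub : LocBdd u)
    (heq : ∀ x ≥ (0:ℝ), u x = α * (g x + Psi μ u x)) :
    (∀ x ≥ (0:ℝ), HasSum (fun n : ℕ => α ^ (n + 1) * ((Psi μ)^[n] g) x) (u x)) ∧
      ∀ x ≥ (0:ℝ), ∀ K : Set ℝ, IsCompact K →
        TendstoUniformlyOn
          (fun (N : ℕ) (a : ℝ) => ∑ n ∈ Finset.range N, a ^ (n + 1) * ((Psi μ)^[n] g) x)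
          (fun a => ∑' n : ℕ, a ^ (n + 1) * ((Psi μ)^[n] g) x) atTop K := by
  classical
  set G := (Ici (0:ℝ)).indicator g with hGdef
  set U := (Ici (0:ℝ)).indicator u with hUdef
  have hG : SolSeries.Good G := SolSeries.good_indicator hg hgb
  have hU : SolSeries.Good U := SolSeries.good_indicator hu hub
  have hgG : Set.EqOn g G (Ici 0) := fun y hy => (indicator_of_mem hy g).symm
  have huU : Set.EqOn u U (Ici 0) := fun y hy => (indicator_of_mem hy u).symm
  have hiterG : ∀ (n : ℕ), ∀ x ≥ (0:ℝ), (Psi μ)^[n] g x = (Psi μ)^[n] G x :=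
    fun n x hx => SolSeries.iter_congr μ hgG n (mem_Ici.mpr hx)
  have hequ : ∀ x ≥ (0:ℝ), U x = α * G x + α * Psi μ U x := by
    intro x hx
    have h1 : Psi μ u x = Psi μ U x :=
      SolSeries.Psi_congr μ (fun y hy => huU (mem_Ici.mpr hy.1)) ⟨hx, le_refl x⟩
    rw [← huU (mem_Ici.mpr hx), ← hgG (mem_Ici.mpr hx), ← h1, heq x hx]
    ring
  constructor
  · intro x hx
    obtain ⟨MG, hMG0, hMG⟩ := hG.2 x
    have hMG' : ∀ z ∈ Icc (0:ℝ) x, |G z| ≤ MG := fun z hz => hMG z ⟨by linarith [hz.1], hz.2⟩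
    have hbG := SolSeries.iter_bound μ hG hx hMG0 hMG'
    obtain ⟨MU, hMU0, hMU⟩ := hU.2 x
    have hMU' : ∀ z ∈ Icc (0:ℝ) x, |U z| ≤ MU := fun z hz => hMU z ⟨by linarith [hz.1], hz.2⟩
    have hbU := SolSeries.iter_bound μ hU hx hMU0 hMU'
    have hxmem : x ∈ Icc (0:ℝ) x := ⟨hx, le_refl x⟩
    have hfb : ∀ n : ℕ, ‖α ^ (n + 1) * (Psi μ)^[n] g x‖ ≤
        |α| * MG * ((|α| * (2 * x)) ^ n / n.factorial) := by
      intro n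
      rw [hiterG n x hx, Real.norm_eq_abs, abs_mul, abs_pow, pow_succ]
      calc |α| ^ n * |α| * |(Psi μ)^[n] G x|
          ≤ |α| ^ n * |α| * (MG * (2 * x) ^ n / n.factorial) :=
            mul_le_mul_of_nonneg_left (hbG n x hxmem) (by positivity)
      _ = |α| * MG * ((|α| * (2 * x)) ^ n / n.factorial) := by rw [mul_pow]; ring
    have hs : Summable (fun n : ℕ => α ^ (n + 1) * (Psi μ)^[n] g x) :=
      Summable.of_norm_bounded
        ((Real.summable_pow_div_factorial (|α| * (2 * x))).mul_left (|α| * MG)) hfb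
    have htail : Tendsto (fun N : ℕ => α ^ N * (Psi μ)^[N] U x) atTop (𝓝 0) := by
      refine squeeze_zero_norm (fun N => ?_)
        ((Real.summable_pow_div_factorial (|α| * (2 * x))).mul_left MU).tendsto_atTop_zero
      rw [Real.norm_eq_abs, abs_mul, abs_pow]
      calc |α| ^ N * |(Psi μ)^[N] U x|
          ≤ |α| ^ N * (MU * (2 * x) ^ N / N.factorial) :=
            mul_le_mul_of_nonneg_left (hbU N x hxmem) (by positivity)
      _ = MU * ((|α| * (2 * x)) ^ N / N.factorial) := by rw [mul_pow]; ring
    have hpartial : Tendsto (fun N => ∑ n ∈ Finset.range N, α ^ (n + 1) * (Psi μ)^[n] g x)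
        atTop (𝓝 (U x)) := by
      have hfn : (fun N => ∑ n ∈ Finset.range N, α ^ (n + 1) * (Psi μ)^[n] g x)
          = fun N => U x - α ^ N * (Psi μ)^[N] U x := by
        funext N
        have ht := SolSeries.telescope μ hG hU α hequ N x hx
        have hsg : (∑ n ∈ Finset.range N, α ^ (n + 1) * (Psi μ)^[n] g x)
            = ∑ n ∈ Finset.range N, α ^ (n + 1) * (Psi μ)^[n] G x :=
          Finset.sum_congr rfl fun n _ => by rw [hiterG n x hx]
        rw [hsg]
        linarith [ht]
      rw [hfn]
      simpa using tendsto_const_nhds.sub htail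
    have htsum : (∑' n : ℕ, α ^ (n + 1) * (Psi μ)^[n] g x) = U x :=
      tendsto_nhds_unique hs.hasSum.tendsto_sum_nat hpartial
    have hfin := hs.hasSum
    rw [htsum] at hfin
    rw [huU (mem_Ici.mpr hx)]
    exact hfin
  · intro x hx K hK
    obtain ⟨MG, hMG0, hMG⟩ := hG.2 x
    have hMG' : ∀ z ∈ Icc (0:ℝ) x, |G z| ≤ MG := fun z hz => hMG z ⟨by linarith [hz.1], hz.2⟩
    have hbG := SolSeries.iter_bound μ hG hx hMG0 hMG'
    have hxmem : x ∈ Icc (0:ℝ) x := ⟨hx, le_refl x⟩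
    obtain ⟨R, hR⟩ := hK.isBounded.exists_norm_le
    set R' := max R 0 with hR'def
    have hR'0 : (0:ℝ) ≤ R' := le_max_right _ _
    refine tendstoUniformlyOn_tsum_nat
      (u := fun n => R' * MG * ((R' * (2 * x)) ^ n / n.factorial))
      ((Real.summable_pow_div_factorial (R' * (2 * x))).mul_left (R' * MG)) ?_
    intro n a ha
    rw [hiterG n x hx, Real.norm_eq_abs, abs_mul, abs_pow]
    have haR : |a| ≤ R' := (hR a ha).trans (le_max_left _ _)
    calc |a| ^ (n + 1) * |(Psi μ)^[n] G x|
        ≤ R' ^ (n + 1) * (MG * (2 * x) ^ n / n.factorial) :=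
          mul_le_mul (pow_le_pow_left₀ (abs_nonneg a) haR _) (hbG n x hxmem)
            (abs_nonneg _) (by positivity)
    _ = R' * MG * ((R' * (2 * x)) ^ n / n.factorial) := by
        rw [mul_pow, pow_succ]; ring
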